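/- Let n ≥ 1 and λ > 0. For every p with 1 ≤ p ≤ ∞ and all x, y ∈ ℝⁿ, ‖σ_λ(x) − σ_λ(y)‖_p ≤ (λ/2) ‖x − y‖_p. That is, the softmax function with inverse temperature λ is (λ/2)-Lipschitz with respect to every ℓ_p norm. -/

import Mathlib

open scoped ENNReal BigOperators

/-- The softmax function with inverse temperature `lam`. -/
noncomputable def softmax {n : ℕ} (lam : ℝ) (x : Fin n → ℝ) : Fin n → ℝ :=
  fun i => Real.exp (lam * x i) / ∑ j, Real.exp (lam * x j)

/-- The ℓ_p norm on `Fin n → ℝ`, for `p ∈ [1, ∞]`. -/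
noncomputable def lpNorm {n : ℕ} (p : ℝ≥0∞) (x : Fin n → ℝ) : ℝ :=
  if p = ⊤ then ⨆ i, |x i| else (∑ i, |x i| ^ p.toReal) ^ (1 / p.toReal)

/-- The ℓ_p-induced operator norm of a matrix. -/
noncomputable def opNorm {n m : ℕ} (p : ℝ≥0∞) (A : Matrix (Fin n) (Fin m) ℝ) : ℝ :=
  ⨆ v : {v : Fin m → ℝ // v ≠ 0}, lpNorm p (A.mulVec v.val) / lpNorm p v.val

/-- The matrix `Diag(s) - s sᵀ` (Jacobian of softmax with `lam = 1` at a point with value `s`). -/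
noncomputable def softmaxJac {n : ℕ} (s : Fin n → ℝ) : Matrix (Fin n) (Fin n) ℝ :=
  Matrix.diagonal s - Matrix.vecMulVec s s

/-- The open (interior of the) probability simplex. -/
def openSimplex (n : ℕ) : Set (Fin n → ℝ) :=
  {u | (∀ i, 0 < u i) ∧ ∑ i, u i = 1}

/-- The (closed) probability simplex. -/
def probSimplex (n : ℕ) : Set (Fin n → ℝ) :=
  {u | (∀ i, 0 ≤ u i) ∧ ∑ i, u i = 1}

section SoftmaxAux

lemma sm_aux_expand {n : ℕ} (s w : Fin n → ℝ) (i : Fin n) :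
    s i * (w i - ∑ j, s j * w j) = ∑ j, s i * ((if j = i then 1 else 0) - s j) * w j := by
  have h : ∀ j, s i * ((if j = i then (1:ℝ) else 0) - s j) * w j
      = (if j = i then s i * w j else 0) - s i * (s j * w j) := by
    intro j; by_cases hj : j = i <;> simp [hj] <;> ring
  simp only [h, Finset.sum_sub_distrib, Finset.sum_ite_eq' Finset.univ i, Finset.mem_univ,
    if_true, ← Finset.mul_sum]
  ring

lemma sm_aux_abs_le {n : ℕ} {lam : ℝ} (hlam : 0 ≤ lam) (s w : Fin n → ℝ) (i : Fin n) :
    |lam * s i * (w i - ∑ j, s j * w j)|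
      ≤ lam * ∑ j, |s i * ((if j = i then 1 else 0) - s j)| * |w j| := by
  rw [mul_assoc, sm_aux_expand s w i, abs_mul, abs_of_nonneg hlam]
  gcongr
  calc |∑ j, s i * ((if j = i then 1 else 0) - s j) * w j|
      ≤ ∑ j, |s i * ((if j = i then 1 else 0) - s j) * w j| := Finset.abs_sum_le_sum_abs _ _
    _ = ∑ j, |s i * ((if j = i then 1 else 0) - s j)| * |w j| := by
        exact Finset.sum_congr rfl fun j _ => abs_mul _ _

lemma sm_aux_row_sum {n : ℕ} (s : Fin n → ℝ) (hs : ∀ i, 0 < s i) (hsum : ∑ i, s i = 1)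
    (i : Fin n) :
    ∑ j, |s i * ((if j = i then 1 else 0) - s j)| = 2 * (s i * (1 - s i)) := by
  have h1 : s i ≤ 1 := hsum ▸ Finset.single_le_sum (fun j _ => (hs j).le) (Finset.mem_univ i)
  have herase : ∑ j ∈ Finset.univ.erase i, s j = 1 - s i := by
    have := Finset.sum_erase_add Finset.univ s (Finset.mem_univ i)
    linarith [hsum ▸ this]
  rw [← Finset.sum_erase_add _ _ (Finset.mem_univ i)]
  have hoff : ∀ j ∈ Finset.univ.erase i, |s i * ((if j = i then (1:ℝ) else 0) - s j)| = s i * s j := by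
    intro j hj
    rw [if_neg (Finset.ne_of_mem_erase hj), zero_sub, mul_neg, abs_neg,
      abs_of_nonneg (mul_nonneg (hs i).le (hs j).le)]
  rw [Finset.sum_congr rfl hoff, ← Finset.mul_sum, herase, if_pos rfl,
    abs_of_nonneg (mul_nonneg (hs i).le (by linarith))]
  ring

lemma sm_aux_abs_symm {n : ℕ} (s : Fin n → ℝ) (i j : Fin n) :
    |s i * ((if j = i then 1 else 0) - s j)| = |s j * ((if i = j then 1 else 0) - s i)| := by
  by_cases hj : j = i
  · subst hj; simp
  · rw [if_neg hj, if_neg (Ne.symm hj)]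
    simp only [zero_sub, mul_neg, abs_neg, abs_mul]
    ring

lemma sm_key_fin {n : ℕ} {r : ℝ} (hr : 1 ≤ r) {lam : ℝ} (hlam : 0 < lam)
    (s w : Fin n → ℝ) (hs : ∀ i, 0 < s i) (hsum : ∑ i, s i = 1) :
    ∑ i, |lam * s i * (w i - ∑ j, s j * w j)| ^ r ≤ (lam / 2) ^ r * ∑ j, |w j| ^ r := by
  have hr0 : (0:ℝ) < r := by linarith
  set b : Fin n → Fin n → ℝ := fun i j => |s i * ((if j = i then 1 else 0) - s j)| with hb
  have hbnn : ∀ i j, 0 ≤ b i j := fun i j => abs_nonneg _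
  have hs1 : ∀ i, s i ≤ 1 := fun i =>
    hsum ▸ Finset.single_le_sum (fun j _ => (hs j).le) (Finset.mem_univ i)
  have hB : ∀ i, ∑ j, b i j = 2 * (s i * (1 - s i)) := sm_aux_row_sum s hs hsum
  have hBle : ∀ i, 2 * (s i * (1 - s i)) ≤ 1 / 2 := by
    intro i; nlinarith [hs i, hs1 i, sq_nonneg (2 * s i - 1)]
  have hBnn : ∀ i, 0 ≤ 2 * (s i * (1 - s i)) := by
    intro i; have := hs i; have := hs1 i; nlinarith
  have hrow : ∀ i, |lam * s i * (w i - ∑ j, s j * w j)| ^ r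
      ≤ lam ^ r * (1 / 2) ^ (r - 1) * ∑ j, b i j * |w j| ^ r := by
    intro i
    set B := 2 * (s i * (1 - s i)) with hBdef
    have hle1 : |lam * s i * (w i - ∑ j, s j * w j)| ≤ lam * ∑ j, b i j * |w j| :=
      sm_aux_abs_le hlam.le s w i
    rcases eq_or_lt_of_le (hBnn i) with hB0 | hBpos
    · have hall : ∀ j ∈ Finset.univ, b i j = 0 := by
        intro j hj
        exact (Finset.sum_eq_zero_iff_of_nonneg (fun j _ => hbnn i j)).mp
          (by rw [hB i, ← hB0]) j hj
      have h0 : |lam * s i * (w i - ∑ j, s j * w j)| = 0 := by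
        have hz : lam * ∑ j, b i j * |w j| = 0 := by
          rw [Finset.sum_eq_zero (fun j hj => by rw [hall j hj, zero_mul]), mul_zero]
        exact le_antisymm (hz ▸ hle1) (abs_nonneg _)
      rw [h0, Real.zero_rpow hr0.ne']
      positivity
    · have hmu : ∑ j, b i j / B = 1 := by
        rw [← Finset.sum_div, hB i, ← hBdef, div_self hBpos.ne']
      have hhold := Real.rpow_arith_mean_le_arith_mean_rpow Finset.univ
        (fun j => b i j / B) (fun j => |w j|)
        (fun j _ => div_nonneg (hbnn i j) hBpos.le) hmu (fun j _ => abs_nonneg _) hr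
      have hsum_eq : ∑ j, b i j * |w j| = B * ∑ j, b i j / B * |w j| := by
        rw [Finset.mul_sum]
        exact Finset.sum_congr rfl fun j _ => by
          have hBne : B ≠ 0 := hBpos.ne'
          clear_value B
          field_simp
      calc |lam * s i * (w i - ∑ j, s j * w j)| ^ r
          ≤ (lam * ∑ j, b i j * |w j|) ^ r := by
            apply Real.rpow_le_rpow (abs_nonneg _) hle1 hr0.le
        _ = lam ^ r * (B * ∑ j, b i j / B * |w j|) ^ r := by
            rw [hsum_eq, ← Real.mul_rpow hlam.le (by positivity)]
        _ = lam ^ r * (B ^ r * (∑ j, b i j / B * |w j|) ^ r) := by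
            rw [Real.mul_rpow hBpos.le (by positivity)]
        _ ≤ lam ^ r * (B ^ r * ∑ j, b i j / B * |w j| ^ r) := by
            have h1 : (0:ℝ) ≤ lam ^ r := by positivity
            have h2 : (0:ℝ) ≤ B ^ r := by positivity
            exact mul_le_mul_of_nonneg_left (mul_le_mul_of_nonneg_left hhold h2) h1
        _ = lam ^ r * (B ^ (r - 1) * ∑ j, b i j * |w j| ^ r) := by
            congr 1
            have hBne : B ≠ 0 := hBpos.ne'
            have hterm : ∀ j, B ^ r * (b i j / B * |w j| ^ r)
                = B ^ (r - 1) * (b i j * |w j| ^ r) := by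
              intro j
              rw [Real.rpow_sub hBpos, Real.rpow_one]
              ring
            rw [Finset.mul_sum, Finset.mul_sum]
            exact Finset.sum_congr rfl fun j _ => hterm j
        _ ≤ lam ^ r * ((1 / 2) ^ (r - 1) * ∑ j, b i j * |w j| ^ r) := by
            have h1 : (0:ℝ) ≤ lam ^ r := by positivity
            have h3 : B ^ (r - 1) ≤ (1 / 2 : ℝ) ^ (r - 1) :=
              Real.rpow_le_rpow hBpos.le (hBle i) (by linarith)
            have h4 : (0:ℝ) ≤ ∑ j, b i j * |w j| ^ r := by positivity
            exact mul_le_mul_of_nonneg_left (mul_le_mul_of_nonneg_right h3 h4) h1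
        _ = lam ^ r * (1 / 2) ^ (r - 1) * ∑ j, b i j * |w j| ^ r := by ring
  calc ∑ i, |lam * s i * (w i - ∑ j, s j * w j)| ^ r
      ≤ ∑ i, lam ^ r * (1 / 2) ^ (r - 1) * ∑ j, b i j * |w j| ^ r :=
        Finset.sum_le_sum fun i _ => hrow i
    _ = lam ^ r * (1 / 2) ^ (r - 1) * ∑ j, (∑ i, b i j) * |w j| ^ r := by
        rw [← Finset.mul_sum, Finset.sum_comm]
        congr 1
        exact Finset.sum_congr rfl fun j _ => by rw [Finset.sum_mul]
    _ ≤ lam ^ r * (1 / 2) ^ (r - 1) * ∑ j, (1 / 2) * |w j| ^ r := by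
        have h1 : (0:ℝ) ≤ lam ^ r * (1 / 2) ^ (r - 1) := by positivity
        apply mul_le_mul_of_nonneg_left _ h1
        apply Finset.sum_le_sum
        intro j _
        have hcol : ∑ i, b i j = 2 * (s j * (1 - s j)) := by
          rw [Finset.sum_congr rfl fun i _ => sm_aux_abs_symm s i j]
          exact sm_aux_row_sum s hs hsum j
        rw [hcol]
        exact mul_le_mul_of_nonneg_right (hBle j) (by positivity)
    _ = (lam / 2) ^ r * ∑ j, |w j| ^ r := by
        have hconst : lam ^ r * (1 / 2 : ℝ) ^ (r - 1) * (1 / 2) = (lam / 2) ^ r := by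
          rw [Real.div_rpow hlam.le (by norm_num : (0:ℝ) ≤ 2),
            Real.rpow_sub (by norm_num : (0:ℝ) < 1/2), Real.rpow_one,
            Real.div_rpow (by norm_num : (0:ℝ) ≤ 1) (by norm_num : (0:ℝ) ≤ 2), Real.one_rpow]
          have h2 : (2:ℝ) ^ r ≠ 0 := by positivity
          field_simp
        rw [← Finset.mul_sum, ← mul_assoc, hconst]

lemma sm_key_inf {n : ℕ} (hn : 1 ≤ n) {lam : ℝ} (hlam : 0 < lam)
    (s w : Fin n → ℝ) (hs : ∀ i, 0 < s i) (hsum : ∑ i, s i = 1) :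
    ⨆ i, |lam * s i * (w i - ∑ j, s j * w j)| ≤ lam / 2 * ⨆ i, |w i| := by
  haveI : Nonempty (Fin n) := Fin.pos_iff_nonempty.mp hn
  set M := ⨆ i, |w i| with hM
  have hMle : ∀ j, |w j| ≤ M :=
    fun j => le_ciSup (f := fun i => |w i|) (Set.Finite.bddAbove (Set.finite_range _)) j
  have hMnn : 0 ≤ M := le_trans (abs_nonneg _) (hMle (Classical.arbitrary _))
  apply ciSup_le
  intro i
  have hs1 : s i ≤ 1 := hsum ▸ Finset.single_le_sum (fun j _ => (hs j).le) (Finset.mem_univ i)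
  calc |lam * s i * (w i - ∑ j, s j * w j)|
      ≤ lam * ∑ j, |s i * ((if j = i then 1 else 0) - s j)| * |w j| := sm_aux_abs_le hlam.le s w i
    _ ≤ lam * ∑ j, |s i * ((if j = i then 1 else 0) - s j)| * M := by
        apply mul_le_mul_of_nonneg_left _ hlam.le
        exact Finset.sum_le_sum fun j _ =>
          mul_le_mul_of_nonneg_left (hMle j) (abs_nonneg _)
    _ = lam * (2 * (s i * (1 - s i)) * M) := by
        rw [← Finset.sum_mul, sm_aux_row_sum s hs hsum i]
    _ ≤ lam / 2 * M := by
        have h1 : 2 * (s i * (1 - s i)) ≤ 1 / 2 := by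
          nlinarith [hs i, sq_nonneg (2 * s i - 1)]
        have h2 : 2 * (s i * (1 - s i)) * M ≤ (1/2) * M :=
          mul_le_mul_of_nonneg_right h1 hMnn
        calc lam * (2 * (s i * (1 - s i)) * M) ≤ lam * ((1/2) * M) :=
              mul_le_mul_of_nonneg_left h2 hlam.le
          _ = lam / 2 * M := by ring

lemma sm_jac_bound {n : ℕ} (hn : 1 ≤ n) {p : ℝ≥0∞} (hp : 1 ≤ p) {lam : ℝ} (hlam : 0 < lam)
    (s w : Fin n → ℝ) (hs : ∀ i, 0 < s i) (hsum : ∑ i, s i = 1) :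
    lpNorm p (fun i => lam * s i * (w i - ∑ j, s j * w j)) ≤ lam / 2 * lpNorm p w := by
  by_cases hptop : p = ⊤
  · subst hptop
    rw [lpNorm, lpNorm, if_pos rfl, if_pos rfl]
    exact sm_key_inf hn hlam s w hs hsum
  · have hr : 1 ≤ p.toReal := by
      rw [← ENNReal.toReal_one]
      exact ENNReal.toReal_mono hptop hp
    have hr0 : 0 < p.toReal := by linarith
    rw [lpNorm, lpNorm, if_neg hptop, if_neg hptop]
    set r := p.toReal
    calc (∑ i, |lam * s i * (w i - ∑ j, s j * w j)| ^ r) ^ (1/r)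
        ≤ ((lam / 2) ^ r * ∑ j, |w j| ^ r) ^ (1/r) := by
          apply Real.rpow_le_rpow (by positivity) (sm_key_fin hr hlam s w hs hsum) (by positivity)
      _ = lam / 2 * (∑ j, |w j| ^ r) ^ (1/r) := by
          rw [Real.mul_rpow (by positivity) (by positivity)]
          congr 1
          rw [← Real.rpow_mul (by positivity : (0:ℝ) ≤ lam / 2), mul_one_div,
            div_self hr0.ne', Real.rpow_one]

lemma lpNorm_eq_norm {n : ℕ} {p : ℝ≥0∞} (hp : 1 ≤ p) (v : Fin n → ℝ) :
    lpNorm p v = @norm (PiLp p fun _ : Fin n => ℝ)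
      (haveI : Fact (1 ≤ p) := ⟨hp⟩; PiLp.instNorm p _) ((WithLp.equiv p _).symm v) := by
  haveI : Fact (1 ≤ p) := ⟨hp⟩
  by_cases hptop : p = ⊤
  · subst hptop
    rw [lpNorm, if_pos rfl, PiLp.norm_eq_ciSup]
    simp [Real.norm_eq_abs]
  · have hr0 : 0 < p.toReal :=
      lt_of_lt_of_le one_pos (by rw [← ENNReal.toReal_one]; exact ENNReal.toReal_mono hptop hp)
    rw [lpNorm, if_neg hptop, PiLp.norm_eq_sum hr0]
    simp [Real.norm_eq_abs]

lemma sm_S_pos {n : ℕ} (hn : 1 ≤ n) (lam : ℝ) (v : Fin n → ℝ) :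
    0 < ∑ j, Real.exp (lam * v j) := by
  haveI : Nonempty (Fin n) := Fin.pos_iff_nonempty.mp hn
  exact Finset.sum_pos (fun j _ => Real.exp_pos _) Finset.univ_nonempty

lemma sm_pos {n : ℕ} (hn : 1 ≤ n) (lam : ℝ) (v : Fin n → ℝ) (i : Fin n) :
    0 < softmax lam v i :=
  div_pos (Real.exp_pos _) (sm_S_pos hn lam v)

lemma sm_sum_one {n : ℕ} (hn : 1 ≤ n) (lam : ℝ) (v : Fin n → ℝ) :
    ∑ i, softmax lam v i = 1 := by
  simp only [softmax]
  rw [← Finset.sum_div]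
  exact div_self (sm_S_pos hn lam v).ne'

lemma sm_hasDerivAt {n : ℕ} (hn : 1 ≤ n) (lam : ℝ) (y w : Fin n → ℝ) (t : ℝ) (i : Fin n) :
    HasDerivAt (fun τ : ℝ => softmax lam (fun k => y k + τ * w k) i)
      (lam * softmax lam (fun k => y k + t * w k) i *
        (w i - ∑ j, softmax lam (fun k => y k + t * w k) j * w j)) t := by
  have hz : ∀ j, HasDerivAt (fun τ : ℝ => Real.exp (lam * (y j + τ * w j)))
      (lam * w j * Real.exp (lam * (y j + t * w j))) t := by
    intro j
    have h1 : HasDerivAt (fun τ : ℝ => lam * (y j + τ * w j)) (lam * w j) t := by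
      simpa using (((hasDerivAt_id t).mul_const (w j)).const_add (y j)).const_mul lam
    simpa [mul_comm] using h1.exp
  have hD : HasDerivAt (fun τ : ℝ => ∑ j, Real.exp (lam * (y j + τ * w j)))
      (∑ j, lam * w j * Real.exp (lam * (y j + t * w j))) t :=
    HasDerivAt.fun_sum fun j _ => hz j
  have hS0 : (∑ j, Real.exp (lam * (y j + t * w j))) ≠ 0 := (sm_S_pos hn lam _).ne'
  have hq := (hz i).div hD hS0
  refine hq.congr_deriv ?_
  set D := ∑ j, Real.exp (lam * (y j + t * w j)) with hDdef
  set T := ∑ j, w j * Real.exp (lam * (y j + t * w j)) with hTdef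
  have hsum1 : ∑ j, softmax lam (fun k => y k + t * w k) j * w j = T / D := by
    rw [hTdef, Finset.sum_div]
    exact Finset.sum_congr rfl fun j _ => by rw [softmax]; ring
  have hsum2 : ∑ j, lam * w j * Real.exp (lam * (y j + t * w j)) = lam * T := by
    rw [hTdef, Finset.mul_sum]
    exact Finset.sum_congr rfl fun j _ => by ring
  rw [hsum1, hsum2, softmax]
  simp only [← hDdef]
  field_simp

lemma sm_cont {n : ℕ} (hn : 1 ≤ n) (lam : ℝ) (y w : Fin n → ℝ) (i : Fin n) :
    Continuous (fun t : ℝ => softmax lam (fun k => y k + t * w k) i) := by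
  show Continuous fun t : ℝ =>
    Real.exp (lam * (y i + t * w i)) / ∑ j, Real.exp (lam * (y j + t * w j))
  apply Continuous.div
  · exact Real.continuous_exp.comp (by continuity)
  · exact continuous_finset_sum _ fun j _ => Real.continuous_exp.comp (by continuity)
  · exact fun t => (sm_S_pos hn lam _).ne'

end SoftmaxAux

/-- softmax with inverse temperature lam is (lam/2)-Lipschitz in every ℓ_p norm. -/
theorem softmax_lipschitz_lp {n : ℕ} (hn : 1 ≤ n) (lam : ℝ) (hlam : 0 < lam)
    (p : ℝ≥0∞) (hp : 1 ≤ p) (x y : Fin n → ℝ) :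
    lpNorm p (softmax lam x - softmax lam y) ≤ (lam / 2) * lpNorm p (x - y) := by
  haveI : Fact (1 ≤ p) := ⟨hp⟩
  haveI : Nonempty (Fin n) := Fin.pos_iff_nonempty.mp hn
  set w : Fin n → ℝ := x - y with hwdef
  set sfn : ℝ → Fin n → ℝ := fun t => softmax lam (fun k => y k + t * w k) with hsfn
  set u : ℝ → Fin n → ℝ := fun t i => lam * sfn t i * (w i - ∑ j, sfn t j * w j) with hu
  set F : ℝ → PiLp p (fun _ : Fin n => ℝ) :=
    fun t => (WithLp.equiv p (Fin n → ℝ)).symm (u t) with hF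
  set G : ℝ → PiLp p (fun _ : Fin n => ℝ) :=
    fun t => (WithLp.equiv p (Fin n → ℝ)).symm (sfn t) with hG
  have hderiv : ∀ t : ℝ, HasDerivAt G (F t) t := by
    intro t
    have h1 : HasDerivAt sfn (u t) t := by
      rw [hasDerivAt_pi]
      intro i
      exact sm_hasDerivAt hn lam y w t i
    exact ((PiLp.continuousLinearEquiv p ℝ
      (fun _ : Fin n => ℝ)).symm.hasFDerivAt).comp_hasDerivAt t h1
  have hscont : ∀ i, Continuous fun t : ℝ => sfn t i := fun i => sm_cont hn lam y w i
  have hucont : ∀ i, Continuous fun t : ℝ => u t i := by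
    intro i
    apply Continuous.mul (continuous_const.mul (hscont i))
    apply Continuous.sub continuous_const
    exact continuous_finset_sum _ fun j _ => (hscont j).mul continuous_const
  have hFcont : Continuous F := by
    apply Continuous.comp (PiLp.continuousLinearEquiv p ℝ (fun _ : Fin n => ℝ)).symm.continuous
    exact continuous_pi hucont
  have hFTC : ∫ t in (0:ℝ)..1, F t = G 1 - G 0 :=
    intervalIntegral.integral_eq_sub_of_hasDerivAt (fun t _ => hderiv t)
      (hFcont.intervalIntegrable 0 1)
  have hbound : ∀ t : ℝ, ‖F t‖ ≤ lam / 2 * lpNorm p w := by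
    intro t
    have h1 : ‖F t‖ = lpNorm p (u t) := (lpNorm_eq_norm hp (u t)).symm
    rw [h1]
    exact sm_jac_bound hn hp hlam (sfn t) w
      (fun i => sm_pos hn lam _ i) (sm_sum_one hn lam _)
  have hnorm : ‖G 1 - G 0‖ ≤ lam / 2 * lpNorm p w := by
    rw [← hFTC]
    calc ‖∫ t in (0:ℝ)..1, F t‖ ≤ ∫ t in (0:ℝ)..1, ‖F t‖ :=
          intervalIntegral.norm_integral_le_integral_norm zero_le_one
      _ ≤ ∫ _ in (0:ℝ)..1, (lam / 2 * lpNorm p w) := by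
          apply intervalIntegral.integral_mono_on zero_le_one
            (hFcont.norm.intervalIntegrable 0 1) intervalIntegrable_const
          exact fun t _ => hbound t
      _ = lam / 2 * lpNorm p w := by simp
  have h1 : (fun k => y k + (1:ℝ) * w k) = x := by
    funext k; simp [hwdef]
  have h0 : (fun k => y k + (0:ℝ) * w k) = y := by
    funext k; simp
  have hend : G 1 - G 0 = (WithLp.equiv p (Fin n → ℝ)).symm (softmax lam x - softmax lam y) := by
    rw [hG]
    simp only [hsfn, h1, h0]
    rfl
  rw [lpNorm_eq_norm hp, ← hend]
  calc ‖G 1 - G 0‖ ≤ lam / 2 * lpNorm p w := hnorm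
    _ = lam / 2 * lpNorm p (x - y) := by rw [hwdef]
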